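/- Let q be a prime power, F_q a finite field with q elements, and let a, b, K ≥ 0 be integers with a + b ≥ K. Let A be an a×K and B a b×K random matrix over F_q, all entries independent and uniform on F_q, and let X be the (a+b)×K matrix obtained by stacking A on top of B. Then Pr[rank(X) = K] = ∑_{i=max(0,K-b)}^{min(a,K)} P_i(a, K) · P(b, K-i). -/

import Mathlib

open Finset

/-- `P(m,K) = ∏_{i=0}^{K-1} (1 - q^{i-m})`: probability that a uniformly random
`m × K` matrix over a field with `q` elements has rank `K`. -/
noncomputable def Pfr (q m K : ℕ) : ℝ :=
  ∏ i ∈ Finset.range K, (1 - (q : ℝ) ^ ((i : ℤ) - (m : ℤ)))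

/-- The Gaussian binomial coefficient `[K; r]_q`. -/
noncomputable def gaussBinom (q K r : ℕ) : ℝ :=
  ∏ i ∈ Finset.range r, (((q : ℝ) ^ (K - i) - 1) / ((q : ℝ) ^ (r - i) - 1))

/-- `P_r(m,K) = q^{-m(K-r)} · [K; r]_q · ∏_{i=0}^{r-1} (1 - q^{i-m})`. -/
noncomputable def Prk (q m K r : ℕ) : ℝ :=
  (q : ℝ) ^ (-(m : ℤ) * ((K : ℤ) - (r : ℤ))) * gaussBinom q K r *
    ∏ i ∈ Finset.range r, (1 - (q : ℝ) ^ ((i : ℤ) - (m : ℤ)))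


open Finset LinearMap Submodule Module

set_option linter.unusedSectionVars false


variable {F : Type} [Field F] [Fintype F] [DecidableEq F]

lemma inj_iff_li {V W : Type*} [AddCommGroup V] [Module F V] [AddCommGroup W] [Module F W]
    {ι : Type*} [Fintype ι] (b : Basis ι F V) (g : V →ₗ[F] W) :
    Function.Injective g ↔ LinearIndependent F (g ∘ b) := by
  constructor
  · intro h
    exact b.linearIndependent.map' g (LinearMap.ker_eq_bot.mpr h)
  · intro h
    rw [← LinearMap.ker_eq_bot, eq_bot_iff]
    intro x hx
    have hrep : ∑ i, b.repr x i • b i = x := b.sum_repr x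
    have h0 : ∑ i, b.repr x i • g (b i) = 0 := by
      have hgx : g (∑ i, b.repr x i • b i) = 0 := by rw [hrep]; exact hx
      simpa only [map_sum, map_smul] using hgx
    have := Fintype.linearIndependent_iff.mp h (fun i => b.repr x i) (by simpa using h0)
    have : x = 0 := by rw [← hrep]; simp [this]
    simp [this]

lemma card_inj_linearMap (n : ℕ) (V : Type*) [AddCommGroup V] [Module F V]
    [FiniteDimensional F V] :
    Nat.card {g : V →ₗ[F] (Fin n → F) // Function.Injective g} =
      ∏ i ∈ Finset.range (finrank F V),
        (Fintype.card F ^ n - Fintype.card F ^ i) := by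
  set d := finrank F V with hd
  by_cases hdn : d ≤ n
  · let b : Basis (Fin d) F V := finBasis F V
    have e : {g : V →ₗ[F] (Fin n → F) // Function.Injective g} ≃
        {s : Fin d → (Fin n → F) // LinearIndependent F s} :=
      { toFun := fun g => ⟨g.1 ∘ b, (inj_iff_li b g.1).mp g.2⟩
        invFun := fun s => ⟨b.constr F s.1, by
          rw [inj_iff_li b]
          have : ⇑(b.constr F s.1) ∘ ⇑b = s.1 := funext fun i => b.constr_basis F s.1 i
          rw [this]; exact s.2⟩
        left_inv := fun g => Subtype.ext (b.ext fun i => b.constr_basis F _ i)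
        right_inv := fun s => Subtype.ext (funext fun i => b.constr_basis F s.1 i) }
    have hfr : finrank F (Fin n → F) = n := by simp
    have hcard := card_linearIndependent (K := F) (V := Fin n → F) (k := d)
      (by rw [hfr]; exact hdn)
    rw [Nat.card_congr e]
    rw [hcard]
    refine (Fin.prod_univ_eq_prod_range
      (fun i => Fintype.card F ^ Module.finrank F (Fin n → F) - Fintype.card F ^ i) d).trans (Finset.prod_congr rfl fun i _ => ?_)
    rw [hfr]
  · have : IsEmpty {g : V →ₗ[F] (Fin n → F) // Function.Injective g} := by
      constructor
      rintro ⟨g, hg⟩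
      exact hdn (by simpa using LinearMap.finrank_le_finrank_of_injective hg)
    rw [Nat.card_of_isEmpty]
    rw [eq_comm]
    exact Finset.prod_eq_zero (Finset.mem_range.mpr (by omega)) (Nat.sub_self _)

lemma card_ker_fiber (K n : ℕ) (W : Submodule F (Fin K → F)) :
    Nat.card {f : (Fin K → F) →ₗ[F] (Fin n → F) // LinearMap.ker f = W} =
      ∏ i ∈ Finset.range (K - finrank F W),
        (Fintype.card F ^ n - Fintype.card F ^ i) := by
  have e : {f : (Fin K → F) →ₗ[F] (Fin n → F) // LinearMap.ker f = W} ≃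
      {g : ((Fin K → F) ⧸ W) →ₗ[F] (Fin n → F) // Function.Injective g} :=
    { toFun := fun f => ⟨W.liftQ f.1 f.2.ge, by
        rw [← LinearMap.ker_eq_bot]
        exact Submodule.ker_liftQ_eq_bot _ _ _ f.2.le⟩
      invFun := fun g => ⟨g.1 ∘ₗ W.mkQ, by
        rw [LinearMap.ker_comp, LinearMap.ker_eq_bot.mpr g.2, Submodule.comap_bot,
          Submodule.ker_mkQ]⟩
      left_inv := fun f => Subtype.ext (Submodule.liftQ_mkQ _ _ _)
      right_inv := fun g => Subtype.ext (by
        apply Submodule.linearMap_qext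
        exact Submodule.liftQ_mkQ _ _ _) }
  have hq := Submodule.finrank_quotient_add_finrank W
  simp only [Module.finrank_fintype_fun_eq_card, Fintype.card_fin] at hq
  rw [Nat.card_congr e, card_inj_linearMap,
    (by omega : finrank F ((Fin K → F) ⧸ W) = K - finrank F W)]

lemma card_disjoint_ker_fiber (K n : ℕ) (W : Submodule F (Fin K → F)) :
    Nat.card {f : (Fin K → F) →ₗ[F] (Fin n → F) // W ⊓ LinearMap.ker f = ⊥} =
      Fintype.card F ^ (n * (K - finrank F W)) *
      ∏ i ∈ Finset.range (finrank F W),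
        (Fintype.card F ^ n - Fintype.card F ^ i) := by
  obtain ⟨C, hC⟩ := Submodule.exists_isCompl W
  have hcond : ∀ f : (Fin K → F) →ₗ[F] (Fin n → F),
      (W ⊓ LinearMap.ker f = ⊥) ↔ Function.Injective (f ∘ₗ W.subtype) := by
    intro f
    rw [← LinearMap.ker_eq_bot, LinearMap.ker_comp, ← disjoint_iff,
      ← Submodule.disjoint_iff_comap_eq_bot]
  let eV : (W × C) ≃ₗ[F] (Fin K → F) := Submodule.prodEquivOfIsCompl W C hC
  have e1 : {f : (Fin K → F) →ₗ[F] (Fin n → F) // Function.Injective (f ∘ₗ W.subtype)} ≃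
      ({g : W →ₗ[F] (Fin n → F) // Function.Injective g} × (C →ₗ[F] (Fin n → F))) :=
    { toFun := fun f => (⟨f.1 ∘ₗ W.subtype, f.2⟩, f.1 ∘ₗ C.subtype)
      invFun := fun gh => ⟨(gh.1.1.coprod gh.2) ∘ₗ (eV.symm : (Fin K → F) →ₗ[F] W × C), by
        have hcomp : ((gh.1.1.coprod gh.2) ∘ₗ (eV.symm : (Fin K → F) →ₗ[F] W × C)) ∘ₗ
            W.subtype = gh.1.1 := by
          apply LinearMap.ext; intro w
          simp [eV, Submodule.prodEquivOfIsCompl_symm_apply_left]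
        rw [hcomp]; exact gh.1.2⟩
      left_inv := fun f => Subtype.ext (by
        apply LinearMap.ext; intro x
        have h1 : eV (eV.symm x) = x := eV.apply_symm_apply x
        rw [Submodule.coe_prodEquivOfIsCompl'] at h1
        simp only [LinearMap.coe_comp, LinearEquiv.coe_coe, Function.comp_apply,
          LinearMap.coprod_apply, Submodule.coe_subtype]
        rw [← map_add, h1])
      right_inv := fun gh => by
        refine Prod.ext (Subtype.ext ?_) ?_ <;>
        · apply LinearMap.ext; intro x
          simp [eV, Submodule.prodEquivOfIsCompl_symm_apply_left,
            Submodule.prodEquivOfIsCompl_symm_apply_right] }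
  have eM : (C →ₗ[F] (Fin n → F)) ≃ Matrix (Fin n) (Fin (finrank F C)) F :=
    (LinearMap.toMatrix (finBasis F C) (Pi.basisFun F (Fin n))).toEquiv
  have hWC : finrank F W + finrank F C = K := by
    have := Submodule.finrank_add_eq_of_isCompl hC
    simpa using this
  rw [Nat.card_congr ((Equiv.subtypeEquivRight hcond).trans e1), Nat.card_prod,
    card_inj_linearMap, Nat.card_congr eM, Nat.card_eq_fintype_card]
  have : Fintype.card (Matrix (Fin n) (Fin (finrank F C)) F) =
      Fintype.card F ^ (n * (K - finrank F W)) := by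
    rw [(by omega : K - finrank F W = finrank F C)]
    rw [mul_comm n, pow_mul]
    rw [Fintype.card_eq_nat_card]
    simp [Matrix, Nat.card_fun]
  rw [this, mul_comm]

lemma card_grass_mul (K d : ℕ) (hd : d ≤ K) :
    Nat.card {W : Submodule F (Fin K → F) // finrank F W = d} *
      ∏ i ∈ Finset.range d, (Fintype.card F ^ d - Fintype.card F ^ i) =
    ∏ i ∈ Finset.range d, (Fintype.card F ^ K - Fintype.card F ^ i) := by
  classical
  have hfinsub : Finite (Submodule F (Fin K → F)) :=
    Finite.of_injective (fun W => (W : Set (Fin K → F))) SetLike.coe_injective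
  cases nonempty_fintype (Submodule F (Fin K → F))
  have hfr : finrank F (Fin K → F) = K := by simp
  have hR := card_linearIndependent (K := F) (V := Fin K → F) (k := d) (by rw [hfr]; exact hd)
  have hRHS : (∏ i ∈ Finset.range d, (Fintype.card F ^ K - Fintype.card F ^ i)) =
      Nat.card {s : Fin d → (Fin K → F) // LinearIndependent F s} := by
    rw [hR, ← (Fin.prod_univ_eq_prod_range
      (fun i => Fintype.card F ^ K - Fintype.card F ^ i) d)]
    exact Fintype.prod_congr _ _ fun i => by rw [hfr]
  have hsig : Nat.card {s : Fin d → (Fin K → F) // LinearIndependent F s} =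
      ∑ W : Submodule F (Fin K → F),
        Nat.card {x : {s : Fin d → (Fin K → F) // LinearIndependent F s} //
          Submodule.span F (Set.range x.1) = W} := by
    rw [← Nat.card_congr (Equiv.sigmaFiberEquiv
      (fun x : {s : Fin d → (Fin K → F) // LinearIndependent F s} =>
        Submodule.span F (Set.range x.1))),
      Nat.card_eq_fintype_card, Fintype.card_sigma]
    exact Finset.sum_congr rfl fun W _ => (Nat.card_eq_fintype_card).symm
  have hfiber : ∀ W : Submodule F (Fin K → F),
      Nat.card {x : {s : Fin d → (Fin K → F) // LinearIndependent F s} //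
          Submodule.span F (Set.range x.1) = W} =
      if finrank F W = d then
        ∏ i ∈ Finset.range d, (Fintype.card F ^ d - Fintype.card F ^ i) else 0 := by
    intro W
    by_cases hW : finrank F W = d
    · rw [if_pos hW]
      have et : {x : {s : Fin d → (Fin K → F) // LinearIndependent F s} //
          Submodule.span F (Set.range x.1) = W} ≃ {t : Fin d → W // LinearIndependent F t} :=
        { toFun := fun x => ⟨fun i => ⟨x.1.1 i,
            x.2.le (Submodule.subset_span (Set.mem_range_self i))⟩,
            LinearIndependent.of_comp W.subtype x.1.2⟩
          invFun := fun t => ⟨⟨fun i => (t.1 i : Fin K → F),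
              t.2.map' W.subtype W.ker_subtype⟩, by
            have h1 : Set.range (fun i => ((t.1 i : Fin K → F))) =
                W.subtype '' Set.range t.1 := by
              rw [← Set.range_comp]; rfl
            rw [h1, Submodule.span_image,
              t.2.span_eq_top_of_card_eq_finrank' (by simp [hW]), Submodule.map_top,
              Submodule.range_subtype]⟩
          left_inv := fun x => Subtype.ext (Subtype.ext (funext fun i => rfl))
          right_inv := fun t => Subtype.ext (funext fun i => Subtype.ext rfl) }
      have hc := card_linearIndependent (K := F) (V := W) (k := d) (by rw [hW])
      rw [Nat.card_congr et, hc, ← (Fin.prod_univ_eq_prod_range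
        (fun i => Fintype.card F ^ d - Fintype.card F ^ i) d)]
      exact (Fintype.prod_congr _ _ fun i => by rw [hW]).symm
    · rw [if_neg hW]
      have : IsEmpty {x : {s : Fin d → (Fin K → F) // LinearIndependent F s} //
          Submodule.span F (Set.range x.1) = W} := by
        constructor
        rintro ⟨⟨s, hs⟩, hsp⟩
        apply hW
        rw [← hsp, finrank_span_eq_card hs, Fintype.card_fin]
      rw [Nat.card_of_isEmpty]
  rw [hRHS, hsig, Finset.sum_congr rfl fun W _ => hfiber W, ← Finset.sum_filter,
    Finset.sum_const, smul_eq_mul]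
  congr 1
  rw [Nat.card_eq_fintype_card, Fintype.card_subtype]

lemma nat_card_sigma {ι : Type*} [Fintype ι] (f : ι → Type*) [∀ i, Finite (f i)] :
    Nat.card ((i : ι) × f i) = ∑ i, Nat.card (f i) := by
  letI : ∀ i, Fintype (f i) := fun i => Fintype.ofFinite _
  rw [Nat.card_eq_fintype_card, Fintype.card_sigma]
  exact Finset.sum_congr rfl fun i _ => (Nat.card_eq_fintype_card).symm

lemma rank_fromRows_iff (a b K : ℕ) (A : Matrix (Fin a) (Fin K) F)
    (B : Matrix (Fin b) (Fin K) F) :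
    (Matrix.fromRows A B).rank = K ↔
      (LinearMap.ker A.mulVecLin ⊓ LinearMap.ker B.mulVecLin = ⊥) := by
  have hker : LinearMap.ker (Matrix.fromRows A B).mulVecLin =
      LinearMap.ker A.mulVecLin ⊓ LinearMap.ker B.mulVecLin := by
    ext x
    simp only [LinearMap.mem_ker, Matrix.mulVecLin_apply, Submodule.mem_inf,
      Matrix.fromRows_mulVec, funext_iff, Sum.forall, Pi.zero_apply, Sum.elim_inl,
      Sum.elim_inr]
  have h2 := LinearMap.finrank_range_add_finrank_ker (Matrix.fromRows A B).mulVecLin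
  simp only [Module.finrank_fintype_fun_eq_card, Fintype.card_fin] at h2
  rw [hker] at h2
  rw [Matrix.rank]
  constructor
  · intro h
    rw [h] at h2
    exact Submodule.finrank_eq_zero.mp (by omega)
  · intro h
    rw [h] at h2
    simpa using h2

lemma main_count (a b K : ℕ) :
    (Finset.univ.filter
        (fun X : Matrix (Fin a) (Fin K) F × Matrix (Fin b) (Fin K) F =>
          (Matrix.fromRows X.1 X.2).rank = K)).card =
    ∑ d ∈ Finset.range (K+1),
      Nat.card {W : Submodule F (Fin K → F) // finrank F W = d} *
      ((∏ i ∈ Finset.range (K - d), (Fintype.card F ^ a - Fintype.card F ^ i)) *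
       (Fintype.card F ^ (b * (K - d)) *
        ∏ i ∈ Finset.range d, (Fintype.card F ^ b - Fintype.card F ^ i))) := by
  classical
  have hfinsub : Finite (Submodule F (Fin K → F)) :=
    Finite.of_injective (fun W => (W : Set (Fin K → F))) SetLike.coe_injective
  cases nonempty_fintype (Submodule F (Fin K → F))
  letI : Finite ((Fin K → F) →ₗ[F] (Fin a → F)) :=
    Finite.of_injective _ DFunLike.coe_injective
  letI : Finite ((Fin K → F) →ₗ[F] (Fin b → F)) :=
    Finite.of_injective _ DFunLike.coe_injective
  have h0 : (Finset.univ.filter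
        (fun X : Matrix (Fin a) (Fin K) F × Matrix (Fin b) (Fin K) F =>
          (Matrix.fromRows X.1 X.2).rank = K)).card =
      Nat.card {X : Matrix (Fin a) (Fin K) F × Matrix (Fin b) (Fin K) F //
          (Matrix.fromRows X.1 X.2).rank = K} := by
    rw [Nat.card_eq_fintype_card, Fintype.card_subtype]
  rw [h0]
  have e1 : {X : Matrix (Fin a) (Fin K) F × Matrix (Fin b) (Fin K) F //
        (Matrix.fromRows X.1 X.2).rank = K} ≃
      {f : ((Fin K → F) →ₗ[F] (Fin a → F)) × ((Fin K → F) →ₗ[F] (Fin b → F)) //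
        LinearMap.ker f.1 ⊓ LinearMap.ker f.2 = ⊥} :=
    (Matrix.toLin'.toEquiv.prodCongr Matrix.toLin'.toEquiv).subtypeEquiv fun X => by
      rw [rank_fromRows_iff]
      rfl
  have e2 := Equiv.sigmaFiberEquiv
    (fun x : {f : ((Fin K → F) →ₗ[F] (Fin a → F)) × ((Fin K → F) →ₗ[F] (Fin b → F)) //
        LinearMap.ker f.1 ⊓ LinearMap.ker f.2 = ⊥} => LinearMap.ker x.1.1)
  rw [Nat.card_congr e1, ← Nat.card_congr e2, nat_card_sigma]
  have hfib : ∀ W : Submodule F (Fin K → F),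
      Nat.card {x : {f : ((Fin K → F) →ₗ[F] (Fin a → F)) × ((Fin K → F) →ₗ[F] (Fin b → F)) //
          LinearMap.ker f.1 ⊓ LinearMap.ker f.2 = ⊥} // LinearMap.ker x.1.1 = W} =
      (∏ i ∈ Finset.range (K - finrank F W), (Fintype.card F ^ a - Fintype.card F ^ i)) *
      (Fintype.card F ^ (b * (K - finrank F W)) *
        ∏ i ∈ Finset.range (finrank F W), (Fintype.card F ^ b - Fintype.card F ^ i)) := by
    intro W
    have efib : {x : {f : ((Fin K → F) →ₗ[F] (Fin a → F)) × ((Fin K → F) →ₗ[F] (Fin b → F)) //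
          LinearMap.ker f.1 ⊓ LinearMap.ker f.2 = ⊥} // LinearMap.ker x.1.1 = W} ≃
        ({g : (Fin K → F) →ₗ[F] (Fin a → F) // LinearMap.ker g = W} ×
         {h : (Fin K → F) →ₗ[F] (Fin b → F) // W ⊓ LinearMap.ker h = ⊥}) :=
      { toFun := fun x => (⟨x.1.1.1, x.2⟩, ⟨x.1.1.2, by
          obtain ⟨⟨⟨f1, f2⟩, hc⟩, hk⟩ := x
          simp only at hk ⊢
          rw [← hk]; exact hc⟩)
        invFun := fun gh => ⟨⟨(gh.1.1, gh.2.1), by rw [gh.1.2]; exact gh.2.2⟩, gh.1.2⟩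
        left_inv := fun x => Subtype.ext (Subtype.ext rfl)
        right_inv := fun gh => Prod.ext (Subtype.ext rfl) (Subtype.ext rfl) }
    rw [Nat.card_congr efib, Nat.card_prod, card_ker_fiber, card_disjoint_ker_fiber]
  rw [Finset.sum_congr rfl fun W _ => hfib W]
  rw [← Finset.sum_fiberwise_of_maps_to (g := fun W : Submodule F (Fin K → F) => finrank F W)
    (t := Finset.range (K + 1)) (fun W _ => Finset.mem_range_succ_iff.mpr (by
      have h1 := Submodule.finrank_le W
      simpa using h1))]
  refine Finset.sum_congr rfl fun d hd => ?_
  rw [Finset.sum_congr rfl (fun W hW => by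
      rw [(Finset.mem_filter.mp hW).2]), Finset.sum_const, smul_eq_mul]
  congr 1
  rw [Nat.card_eq_fintype_card, Fintype.card_subtype]

section RealArith

variable {q : ℕ}

lemma A_rr (hq : 2 ≤ q) (r : ℕ) :
    ∏ i ∈ Finset.range r, ((q:ℝ)^(r-i) - 1) = ∏ i ∈ Finset.range r, ((q:ℝ)^(i+1) - 1) := by
  rw [← Finset.prod_range_reflect (fun j => ((q:ℝ)^(j+1) - 1)) r]
  refine Finset.prod_congr rfl fun i hi => ?_
  rw [Finset.mem_range] at hi
  congr 2
  omega

lemma prod_pows_split (r d : ℕ) :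
    (∏ i ∈ Finset.range d, ((q:ℝ)^(r+d-i) - 1)) * ∏ i ∈ Finset.range r, ((q:ℝ)^(i+1) - 1) =
    ∏ i ∈ Finset.range (r+d), ((q:ℝ)^(i+1) - 1) := by
  rw [Finset.prod_range_add, mul_comm]
  congr 1
  rw [← Finset.prod_range_reflect (fun j => ((q:ℝ)^(r+j+1) - 1)) d]
  refine Finset.prod_congr rfl fun i hi => ?_
  rw [Finset.mem_range] at hi
  congr 2
  omega

lemma prod_sub_factor (hq : 2 ≤ q) (m t : ℕ) (ht : t ≤ m) :
    ∏ i ∈ Finset.range t, ((q:ℝ)^m - (q:ℝ)^i) =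
    (q:ℝ)^(m*t) * ∏ i ∈ Finset.range t, (1 - (q:ℝ) ^ ((i:ℤ) - (m:ℤ))) := by
  have hq0 : (q:ℝ) ≠ 0 := by positivity
  rw [show (q:ℝ)^(m*t) = ∏ _i ∈ Finset.range t, (q:ℝ)^m by
    rw [Finset.prod_const, Finset.card_range, ← pow_mul], ← Finset.prod_mul_distrib]
  refine Finset.prod_congr rfl fun i hi => ?_
  have h1 : (q:ℝ)^(m:ℕ) * (q:ℝ) ^ ((i:ℤ) - (m:ℤ)) = (q:ℝ)^(i:ℕ) := by
    rw [← zpow_natCast (q:ℝ) m, ← zpow_add₀ hq0, ← zpow_natCast (q:ℝ) i]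
    congr 1
    ring
  rw [mul_sub, mul_one, h1]

lemma prod_sub_factor' (hq : 2 ≤ q) (m t : ℕ) (ht : t ≤ m) :
    ∏ i ∈ Finset.range t, ((q:ℝ)^m - (q:ℝ)^i) =
    (∏ i ∈ Finset.range t, (q:ℝ)^i) * ∏ i ∈ Finset.range t, ((q:ℝ)^(m-i) - 1) := by
  rw [← Finset.prod_mul_distrib]
  refine Finset.prod_congr rfl fun i hi => ?_
  rw [Finset.mem_range] at hi
  rw [mul_sub, mul_one, ← pow_add, show i + (m - i) = m by omega]

lemma cast_prod_sub (hq : 2 ≤ q) (m t : ℕ) :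
    ((∏ i ∈ Finset.range t, (q^m - q^i) : ℕ) : ℝ) =
    ∏ i ∈ Finset.range t, ((q:ℝ)^m - (q:ℝ)^i) ∨ (m < t) := by
  by_cases h : t ≤ m
  · left
    rw [Nat.cast_prod]
    refine Finset.prod_congr rfl fun i hi => ?_
    rw [Finset.mem_range] at hi
    rw [Nat.cast_sub (Nat.pow_le_pow_right (by omega) (by omega))]
    push_cast
    ring
  · right; omega

lemma Pfr_eq_zero (hq : 2 ≤ q) {m K : ℕ} (h : m < K) : Pfr q m K = 0 := by
  refine Finset.prod_eq_zero (Finset.mem_range.mpr h) ?_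
  simp

lemma Prk_eq_zero (hq : 2 ≤ q) {m K r : ℕ} (h : m < r) : Prk q m K r = 0 := by
  unfold Prk
  rw [Finset.prod_eq_zero (Finset.mem_range.mpr h) (by simp)]
  ring

lemma nat_prod_sub_zero {m t : ℕ} (h : m < t) :
    (∏ i ∈ Finset.range t, (q^m - q^i)) = 0 :=
  Finset.prod_eq_zero (Finset.mem_range.mpr h) (Nat.sub_self _)

lemma gaussBinom_eq_ratio (hq : 2 ≤ q) (K r : ℕ) (hr : r ≤ K) :
    gaussBinom q K r = (∏ i ∈ Finset.range r, ((q:ℝ)^(K-i) - 1)) /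
      (∏ i ∈ Finset.range r, ((q:ℝ)^(i+1) - 1)) := by
  rw [gaussBinom, Finset.prod_div_distrib, A_rr hq r]

lemma perD (a b K d : ℕ) (hq : 2 ≤ q) (hd : d ≤ K) (G1 : ℕ)
    (hG : G1 * ∏ i ∈ Finset.range d, (q^d - q^i) = ∏ i ∈ Finset.range d, (q^K - q^i)) :
    ((G1 * ((∏ i ∈ Finset.range (K-d), (q^a - q^i)) *
        (q^(b*(K-d)) * ∏ i ∈ Finset.range d, (q^b - q^i))) : ℕ) : ℝ)
      / ((q:ℝ)^(a*K) * (q:ℝ)^(b*K)) =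
    Prk q a K (K-d) * Pfr q b d := by
  have hq0 : (q:ℝ) ≠ 0 := by positivity
  set r := K - d with hrdef
  have hrd : r + d = K := by omega
  by_cases hra : r ≤ a
  swap
  · -- a < r : both sides zero
    rw [nat_prod_sub_zero (by omega), Prk_eq_zero hq (by omega)]
    push_cast
    ring
  by_cases hdb : d ≤ b
  swap
  · rw [nat_prod_sub_zero (q := q) (m := b) (by omega), Pfr_eq_zero hq (by omega)]
    push_cast
    ring
  -- main case
  have hT : ∀ t : ℕ, (0:ℝ) < ∏ i ∈ Finset.range t, ((q:ℝ)^(i+1) - 1) := by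
    intro t
    refine Finset.prod_pos fun i _ => ?_
    have : (2:ℝ) ≤ (q:ℝ) := by exact_mod_cast hq
    have : (2:ℝ)^(i+1) ≤ (q:ℝ)^(i+1) := pow_le_pow_left₀ (by norm_num) this _
    have h2 : (2:ℝ) ≤ (2:ℝ)^(i+1) := by
      calc (2:ℝ) = 2^1 := (pow_one 2).symm
      _ ≤ 2^(i+1) := pow_le_pow_right₀ (by norm_num) (by omega)
    linarith
  have hPd : (0:ℝ) < ∏ i ∈ Finset.range d, (q:ℝ)^i :=
    Finset.prod_pos fun i _ => by positivity
  -- value of G1 in ℝ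
  have hGR : (G1 : ℝ) = gaussBinom q K r := by
    have hGcast : (G1 : ℝ) * ∏ i ∈ Finset.range d, ((q:ℝ)^d - (q:ℝ)^i) =
        ∏ i ∈ Finset.range d, ((q:ℝ)^K - (q:ℝ)^i) := by
      have h1 := cast_prod_sub hq d d
      have h2 := cast_prod_sub hq K d
      rcases h1 with h1 | h1; swap; · omega
      rcases h2 with h2 | h2; swap; · omega
      rw [← h1, ← h2, ← Nat.cast_mul, hG]
    rw [prod_sub_factor' hq d d le_rfl, prod_sub_factor' hq K d hd] at hGcast
    have hAd : (0:ℝ) < ∏ i ∈ Finset.range d, ((q:ℝ)^(d-i) - 1) := by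
      rw [A_rr hq]; exact hT d
    have hG1 : (G1 : ℝ) = (∏ i ∈ Finset.range d, ((q:ℝ)^(K-i) - 1)) /
        (∏ i ∈ Finset.range d, ((q:ℝ)^(d-i) - 1)) := by
      field_simp at hGcast ⊢
      nlinarith [hGcast]
    rw [hG1, gaussBinom_eq_ratio hq K r (by omega), A_rr hq d]
    -- cross multiply, both sides equal T(K) ratio-wise
    have e1 : (∏ i ∈ Finset.range d, ((q:ℝ)^(K-i) - 1)) *
        ∏ i ∈ Finset.range r, ((q:ℝ)^(i+1) - 1) =
        ∏ i ∈ Finset.range K, ((q:ℝ)^(i+1) - 1) := by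
      have := prod_pows_split (q := q) r d
      rw [hrd] at this
      convert this using 2
    have e2 : (∏ i ∈ Finset.range r, ((q:ℝ)^(K-i) - 1)) *
        ∏ i ∈ Finset.range d, ((q:ℝ)^(i+1) - 1) =
        ∏ i ∈ Finset.range K, ((q:ℝ)^(i+1) - 1) := by
      have := prod_pows_split (q := q) d r
      rw [show d + r = K by omega] at this
      convert this using 2
    rw [div_eq_div_iff (hT d).ne' (hT r).ne', e1, ← e2]
    try ring
  -- final assembly
  have hc1 := cast_prod_sub hq a r
  rcases hc1 with hc1 | hc1; swap; · omega
  have hc2 := cast_prod_sub hq b d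
  rcases hc2 with hc2 | hc2; swap; · omega
  rw [Nat.cast_mul, Nat.cast_mul, Nat.cast_mul, Nat.cast_pow]
  rw [hc1, hc2, prod_sub_factor hq a r hra, prod_sub_factor hq b d hdb, hGR]
  rw [Prk, Pfr]
  have hzpow : (q:ℝ)^(a*r) * ((q:ℝ)^(b*(K-d)) * (q:ℝ)^(b*d)) / ((q:ℝ)^(a*K) * (q:ℝ)^(b*K)) =
      (q:ℝ) ^ (-(a:ℤ) * ((K:ℤ) - ((K-d : ℕ):ℤ))) := by
    rw [div_eq_iff (by positivity), ← zpow_natCast (q:ℝ) (a*r), ← zpow_natCast (q:ℝ) (b*(K-d)),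
      ← zpow_natCast (q:ℝ) (b*d), ← zpow_natCast (q:ℝ) (a*K), ← zpow_natCast (q:ℝ) (b*K),
      ← zpow_add₀ hq0, ← zpow_add₀ hq0, ← zpow_add₀ hq0, ← zpow_add₀ hq0]
    congr 1
    push_cast [hrdef, Nat.cast_sub hd]
    ring
  rw [← hzpow, ← hrdef]
  ring
end RealArith

/-- with `A` a uniformly random `a × K` matrix and `B` an independent
uniformly random `b × K` matrix over a finite field with `q` elements, and `a + b ≥ K`,
the probability that the vertically stacked matrix `X = [A; B]` has rank `K` equals
`∑_{i = max(0,K-b)}^{min(a,K)} P_i(a,K) · P(b, K-i)`. -/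
theorem stacked_rank_prob (q : ℕ) (F : Type) [Field F] [Fintype F] [DecidableEq F]
    (hF : Fintype.card F = q) (a b K : ℕ) (hab : K ≤ a + b) :
    ((Finset.univ.filter
        (fun X : Matrix (Fin a) (Fin K) F × Matrix (Fin b) (Fin K) F =>
          (Matrix.fromRows X.1 X.2).rank = K)).card : ℝ) /
      (Fintype.card (Matrix (Fin a) (Fin K) F × Matrix (Fin b) (Fin K) F) : ℝ) =
    ∑ i ∈ Finset.Icc (K - b) (min a K), Prk q a K i * Pfr q b (K - i) := by
  subst hF
  have hq : 2 ≤ Fintype.card F := Fintype.one_lt_card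
  have hm1 : (Fintype.card (Matrix (Fin a) (Fin K) F)) = Fintype.card F ^ (a*K) := by
    rw [mul_comm a K, pow_mul]; rw [Fintype.card_eq_nat_card]; simp [Matrix, Nat.card_fun]
  have hm2 : (Fintype.card (Matrix (Fin b) (Fin K) F)) = Fintype.card F ^ (b*K) := by
    rw [mul_comm b K, pow_mul]; rw [Fintype.card_eq_nat_card]; simp [Matrix, Nat.card_fun]
  have hden : (Fintype.card (Matrix (Fin a) (Fin K) F × Matrix (Fin b) (Fin K) F) : ℝ) =
      ((Fintype.card F : ℝ))^(a*K) * ((Fintype.card F : ℝ))^(b*K) := by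
    rw [Fintype.card_prod, hm1, hm2]
    push_cast
    ring
  have hIcc : ∑ i ∈ Finset.Icc (K - b) (min a K),
        Prk (Fintype.card F) a K i * Pfr (Fintype.card F) b (K - i) =
      ∑ i ∈ Finset.range (K+1),
        Prk (Fintype.card F) a K i * Pfr (Fintype.card F) b (K - i) := by
    refine Finset.sum_subset ?_ ?_
    · intro x hx
      rw [Finset.mem_Icc] at hx
      rw [Finset.mem_range]
      omega
    · intro x hx hnx
      rw [Finset.mem_range] at hx
      by_cases hxa : x ≤ min a K
      · have hkb : ¬ (K - b ≤ x) := fun h => hnx (Finset.mem_Icc.mpr ⟨h, hxa⟩)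
        rw [Pfr_eq_zero hq (by omega)]
        ring
      · rw [Prk_eq_zero hq (by omega : a < x)]
        ring
  have hrefl := Finset.sum_range_reflect
    (fun i => Prk (Fintype.card F) a K i * Pfr (Fintype.card F) b (K - i)) (K+1)
  rw [main_count, hden, hIcc, ← hrefl, Nat.cast_sum, Finset.sum_div]
  refine Finset.sum_congr rfl fun d hd => ?_
  rw [Finset.mem_range] at hd
  have hd' : d ≤ K := by omega
  show _ = Prk (Fintype.card F) a K (K + 1 - 1 - d) * Pfr (Fintype.card F) b (K - (K + 1 - 1 - d))
  rw [show K + 1 - 1 - d = K - d from by omega, show K - (K - d) = d from by omega]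
  exact perD a b K d hq hd' _ (card_grass_mul K d hd')
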